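/- Let n ≥ 3 and let s_2, …, s_{n−1} and t_2, …, t_{n−2} be integers. Let N = N(s,t) ∈ SL_n(ℤ). Then N · e_{1,2} · N⁻¹ = R_m, where the sequence m = (m_2, …, m_n) is defined recursively by m_2 = 1, m_3 = s_2, and m_i = m_{i−1}·s_{i−1} + m_{i−2}·t_{i−2} for 4 ≤ i ≤ n. -/
import Mathlib


/-- The elementary matrix e_{1,2} (zero-indexed (0,1)): 1's on the diagonal,
1 in the (1,2) entry, and 0's elsewhere. -/
def E12mat (n : ℕ) : Matrix (Fin n) (Fin n) ℤ :=
  Matrix.of fun i j => if i = j then 1 else if (i : ℕ) = 0 ∧ (j : ℕ) = 1 then 1 else 0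

/-- The matrix N(s,t): upper triangular with 1's on the diagonal, entry (i, i+1) equal
to −s_i for 2 ≤ i ≤ n−1 and entry (i, i+2) equal to −t_i for 2 ≤ i ≤ n−2 (one-indexed),
and all other entries 0. -/
def Nmat (n : ℕ) (s t : ℕ → ℤ) : Matrix (Fin n) (Fin n) ℤ :=
  Matrix.of fun i j =>
    if i = j then 1
    else if (j : ℕ) = (i : ℕ) + 1 ∧ 1 ≤ (i : ℕ) then -s ((i : ℕ) + 1)
    else if (j : ℕ) = (i : ℕ) + 2 ∧ 1 ≤ (i : ℕ) then -t ((i : ℕ) + 1)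
    else 0

/-- The row matrix R_m: agrees with the identity except in the first row, which is
(1, m_2, m_3, …, m_n). -/
def Rmat (n : ℕ) (m : ℕ → ℤ) : Matrix (Fin n) (Fin n) ℤ :=
  Matrix.of fun i j => if i = j then 1 else if (i : ℕ) = 0 then m ((j : ℕ) + 1) else 0

lemma sum_pick {n : ℕ} (P : Fin n → Prop) [DecidablePred P] (v : Fin n → ℤ) (c : Fin n)
    (h : ∀ k, P k ↔ k = c) :
    (∑ k, if P k then v k else 0) = v c := by
  simp only [h]
  simp

lemma sum_none {n : ℕ} (P : Fin n → Prop) [DecidablePred P] (v : Fin n → ℤ)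
    (h : ∀ k, ¬ P k) :
    (∑ k, if P k then v k else 0) = 0 := by
  simp [h]

lemma Nmat_split (n : ℕ) (s t : ℕ → ℤ) (i j : Fin n) :
    Nmat n s t i j = (if i = j then 1 else 0)
      + (if (j : ℕ) = (i : ℕ) + 1 ∧ 1 ≤ (i : ℕ) then -s ((i : ℕ) + 1) else 0)
      + (if (j : ℕ) = (i : ℕ) + 2 ∧ 1 ≤ (i : ℕ) then -t ((i : ℕ) + 1) else 0) := by
  simp only [Nmat, Matrix.of_apply]
  rcases eq_or_ne i j with h1 | h1
  · subst h1
    have c2 : ¬(((i:Fin n):ℕ) = (i:ℕ)+1 ∧ 1 ≤ (i:ℕ)) := by omega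
    have c3 : ¬(((i:Fin n):ℕ) = (i:ℕ)+2 ∧ 1 ≤ (i:ℕ)) := by omega
    rw [if_pos rfl, if_pos rfl, if_neg c2, if_neg c3]; ring
  · rw [if_neg h1, if_neg h1]
    by_cases h2 : (j:ℕ) = (i:ℕ)+1 ∧ 1 ≤ (i:ℕ)
    · have c3 : ¬((j:ℕ) = (i:ℕ)+2 ∧ 1 ≤ (i:ℕ)) := by omega
      rw [if_pos h2, if_pos h2, if_neg c3]; ring
    · rw [if_neg h2, if_neg h2]; ring

lemma key (n : ℕ) (hn : 3 ≤ n) (s t m : ℕ → ℤ)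
    (hm2 : m 2 = 1) (hm3 : m 3 = s 2)
    (hrec : ∀ i, 4 ≤ i → i ≤ n → m i = m (i - 1) * s (i - 1) + m (i - 2) * t (i - 2)) :
    Nmat n s t * E12mat n = Rmat n m * Nmat n s t := by
  ext i j
  rw [Matrix.mul_apply, Matrix.mul_apply]
  have hsplitE : ∀ k : Fin n, Nmat n s t i k * E12mat n k j
      = (if k = j then Nmat n s t i k else 0)
        + (if (k:ℕ) = 0 ∧ (j:ℕ) = 1 then Nmat n s t i k else 0) := by
    intro k
    simp only [E12mat, Matrix.of_apply]
    rcases eq_or_ne k j with h1 | h1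
    · subst h1
      have c2 : ¬((k:ℕ) = 0 ∧ (k:ℕ) = 1) := by omega
      rw [if_pos rfl, if_pos rfl, if_neg c2]; ring
    · rw [if_neg h1, if_neg h1]
      by_cases h2 : (k:ℕ) = 0 ∧ (j:ℕ) = 1
      · rw [if_pos h2, if_pos h2]; ring
      · rw [if_neg h2, if_neg h2]; ring
  have hL : (∑ k, Nmat n s t i k * E12mat n k j)
      = Nmat n s t i j + (if (j:ℕ) = 1 then Nmat n s t i ⟨0, by omega⟩ else 0) := by
    simp only [hsplitE]
    rw [Finset.sum_add_distrib]
    congr 1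
    · exact sum_pick _ _ j (fun k => Iff.rfl)
    · by_cases hj : (j:ℕ) = 1
      · rw [if_pos hj]
        exact sum_pick _ _ ⟨0, by omega⟩ (fun k => by simp [Fin.ext_iff]; omega)
      · rw [if_neg hj]
        exact sum_none _ _ (fun k => by omega)
  rw [hL]
  have hsplitR : ∀ k : Fin n, Rmat n m i k * Nmat n s t k j
      = (if k = j then Rmat n m i k else 0)
        + (if (j:ℕ) = (k:ℕ) + 1 ∧ 1 ≤ (k:ℕ) then Rmat n m i k * (-s ((k:ℕ)+1)) else 0)
        + (if (j:ℕ) = (k:ℕ) + 2 ∧ 1 ≤ (k:ℕ) then Rmat n m i k * (-t ((k:ℕ)+1)) else 0) := by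
    intro k
    rw [Nmat_split, mul_add, mul_add, mul_ite, mul_one, mul_zero, mul_ite, mul_zero,
      mul_ite, mul_zero]
  have hR : (∑ k, Rmat n m i k * Nmat n s t k j)
      = Rmat n m i j
        + (if 2 ≤ (j:ℕ) then Rmat n m i ⟨(j:ℕ)-1, by omega⟩ * (-s (j:ℕ)) else 0)
        + (if 3 ≤ (j:ℕ) then Rmat n m i ⟨(j:ℕ)-2, by omega⟩ * (-t ((j:ℕ)-1)) else 0) := by
    simp only [hsplitR]
    rw [Finset.sum_add_distrib, Finset.sum_add_distrib]
    congr 1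
    congr 1
    · exact sum_pick _ _ j (fun k => Iff.rfl)
    · by_cases hj : 2 ≤ (j:ℕ)
      · rw [if_pos hj]
        have := sum_pick (fun k : Fin n => (j:ℕ) = (k:ℕ) + 1 ∧ 1 ≤ (k:ℕ))
          (fun k => Rmat n m i k * (-s ((k:ℕ)+1))) ⟨(j:ℕ)-1, by omega⟩
          (fun k => by simp [Fin.ext_iff]; omega)
        rw [this]
        have h1 : ((j:ℕ)-1) + 1 = (j:ℕ) := by omega
        simp only [h1]
      · rw [if_neg hj]
        exact sum_none _ _ (fun k => by omega)
    · by_cases hj : 3 ≤ (j:ℕ)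
      · rw [if_pos hj]
        have := sum_pick (fun k : Fin n => (j:ℕ) = (k:ℕ) + 2 ∧ 1 ≤ (k:ℕ))
          (fun k => Rmat n m i k * (-t ((k:ℕ)+1))) ⟨(j:ℕ)-2, by omega⟩
          (fun k => by simp [Fin.ext_iff]; omega)
        rw [this]
        have h1 : ((j:ℕ)-2) + 1 = (j:ℕ)-1 := by omega
        simp only [h1]
      · rw [if_neg hj]
        exact sum_none _ _ (fun k => by omega)
  rw [hR]
  by_cases hi : (i:ℕ) = 0
  · -- first row
    have nij : Nmat n s t i j = if i = j then 1 else 0 := by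
      simp only [Nmat, Matrix.of_apply]
      rcases eq_or_ne i j with h | h
      · simp [h]
      · rw [if_neg h, if_neg h, if_neg (by omega), if_neg (by omega)]
    have n0 : Nmat n s t i ⟨0, by omega⟩ = 1 := by
      have : i = ⟨0, by omega⟩ := by rw [Fin.ext_iff]; exact hi
      simp [Nmat, this]
    have rij : Rmat n m i j = if i = j then 1 else m ((j:ℕ)+1) := by
      simp only [Rmat, Matrix.of_apply, hi, if_true]
    rw [nij, n0, rij]
    by_cases hj3 : 3 ≤ (j:ℕ)
    · have r1 : Rmat n m i ⟨(j:ℕ)-1, by omega⟩ = m (j:ℕ) := by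
        have hne : i ≠ ⟨(j:ℕ)-1, by omega⟩ := by rw [Ne, Fin.ext_iff]; simp; omega
        simp only [Rmat, Matrix.of_apply, if_neg hne, hi, if_true]
        congr 1
        omega
      have r2 : Rmat n m i ⟨(j:ℕ)-2, by omega⟩ = m ((j:ℕ)-1) := by
        have hne : i ≠ ⟨(j:ℕ)-2, by omega⟩ := by rw [Ne, Fin.ext_iff]; simp; omega
        simp only [Rmat, Matrix.of_apply, if_neg hne, hi, if_true]
        congr 1
        omega
      have hij : i ≠ j := by rw [Ne, Fin.ext_iff]; omega
      rw [r1, r2, if_neg hij, if_neg hij, if_neg (by omega : ¬(j:ℕ) = 1),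
        if_pos (by omega : 2 ≤ (j:ℕ)), if_pos hj3]
      have hr := hrec ((j:ℕ)+1) (by omega) (by omega)
      have e1 : (j:ℕ)+1-1 = (j:ℕ) := by omega
      have e2 : (j:ℕ)+1-2 = (j:ℕ) - 1 := by omega
      rw [e1, e2] at hr
      linarith
    · rw [if_neg hj3]
      by_cases hj2 : (j:ℕ) = 2
      · have r1 : Rmat n m i ⟨(j:ℕ)-1, by omega⟩ = m (j:ℕ) := by
          have hne : i ≠ ⟨(j:ℕ)-1, by omega⟩ := by rw [Ne, Fin.ext_iff]; simp; omega
          simp only [Rmat, Matrix.of_apply, if_neg hne, hi, if_true]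
          congr 1
          omega
        have hij : i ≠ j := by rw [Ne, Fin.ext_iff]; omega
        rw [r1, if_neg hij, if_neg hij, if_neg (by omega : ¬(j:ℕ) = 1),
          if_pos (by omega : 2 ≤ (j:ℕ)), hj2]
        have : m 3 - m 2 * s 2 = 0 := by rw [hm2, hm3]; ring
        linarith
      · by_cases hj1 : (j:ℕ) = 1
        · have hij : i ≠ j := by rw [Ne, Fin.ext_iff]; omega
          rw [if_neg hij, if_neg hij, if_pos hj1, if_neg (by omega : ¬ 2 ≤ (j:ℕ)), hj1, hm2]
          ring
        · have hij : i = j := by rw [Fin.ext_iff]; omega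
          rw [if_pos hij, if_pos hij, if_neg hj1, if_neg (by omega : ¬ 2 ≤ (j:ℕ))]
          ring
  · -- other rows
    have n0 : Nmat n s t i ⟨0, by omega⟩ = 0 := by
      have hne : i ≠ ⟨0, by omega⟩ := by rw [Ne, Fin.ext_iff]; simp; omega
      simp only [Nmat, Matrix.of_apply, if_neg hne]
      rw [if_neg (by simp), if_neg (by simp)]
    have rij : Rmat n m i j = if i = j then 1 else 0 := by
      simp only [Rmat, Matrix.of_apply, hi, if_false]
    rw [n0, rij, ite_self, add_zero, Nmat_split n s t i j]
    congr 1
    congr 1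
    · by_cases hc : (j:ℕ) = (i:ℕ)+1 ∧ 1 ≤ (i:ℕ)
      · have hj2 : 2 ≤ (j:ℕ) := by omega
        have hie : i = ⟨(j:ℕ)-1, by omega⟩ := by rw [Fin.ext_iff]; simp; omega
        have hr1 : Rmat n m i ⟨(j:ℕ)-1, by omega⟩ = 1 := by simp [Rmat, ← hie]
        rw [if_pos hc, if_pos hj2, hr1, one_mul]
        have he : (i:ℕ)+1 = (j:ℕ) := hc.1.symm
        rw [he]
      · rw [if_neg hc]
        by_cases hj2 : 2 ≤ (j:ℕ)
        · have hne : i ≠ ⟨(j:ℕ)-1, by omega⟩ := by rw [Ne, Fin.ext_iff]; simp; omega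
          have hr1 : Rmat n m i ⟨(j:ℕ)-1, by omega⟩ = 0 := by simp [Rmat, hne, hi]
          rw [if_pos hj2, hr1, zero_mul]
        · rw [if_neg hj2]
    · by_cases hc : (j:ℕ) = (i:ℕ)+2 ∧ 1 ≤ (i:ℕ)
      · have hj3 : 3 ≤ (j:ℕ) := by omega
        have hie : i = ⟨(j:ℕ)-2, by omega⟩ := by rw [Fin.ext_iff]; simp; omega
        have hr1 : Rmat n m i ⟨(j:ℕ)-2, by omega⟩ = 1 := by simp [Rmat, ← hie]
        rw [if_pos hc, if_pos hj3, hr1, one_mul]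
        have he : (i:ℕ)+1 = (j:ℕ)-1 := by omega
        rw [he]
      · rw [if_neg hc]
        by_cases hj3 : 3 ≤ (j:ℕ)
        · have hne : i ≠ ⟨(j:ℕ)-2, by omega⟩ := by rw [Ne, Fin.ext_iff]; simp; omega
          have hr1 : Rmat n m i ⟨(j:ℕ)-2, by omega⟩ = 0 := by simp [Rmat, hne, hi]
          rw [if_pos hj3, hr1, zero_mul]
        · rw [if_neg hj3]

/-- N · e_{1,2} · N⁻¹ = R_m where m_2 = 1, m_3 = s_2 and
m_i = m_{i−1} s_{i−1} + m_{i−2} t_{i−2} for 4 ≤ i ≤ n. -/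
theorem N_conj_e12_eq_Rm (n : ℕ) (hn : 3 ≤ n) (s t m : ℕ → ℤ)
    (hm2 : m 2 = 1) (hm3 : m 3 = s 2)
    (hrec : ∀ i, 4 ≤ i → i ≤ n → m i = m (i - 1) * s (i - 1) + m (i - 2) * t (i - 2))
    (N E R : Matrix.SpecialLinearGroup (Fin n) ℤ)
    (hN : (N : Matrix (Fin n) (Fin n) ℤ) = Nmat n s t)
    (hE : (E : Matrix (Fin n) (Fin n) ℤ) = E12mat n)
    (hR : (R : Matrix (Fin n) (Fin n) ℤ) = Rmat n m) :
    N * E * N⁻¹ = R := by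
  have h : N * E = R * N := Subtype.ext (by
    simp only [Matrix.SpecialLinearGroup.coe_mul, hN, hE, hR]
    exact key n hn s t m hm2 hm3 hrec)
  rw [h, mul_inv_cancel_right]
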